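/- Let d > 0 and let φ be a non-constant C¹ 1-periodic function. Set b(x) = 2dφ'(x)φ(x)/(1+φ(x)²) + φ(x)√(1+φ(x)²). If there exist α ∈ ℝ and a C¹ 1-periodic function F with ∫_0^1 F(x) dx = 0 solving −d F'(x) + b(x) F(x) = φ'(x) + α(1+φ(x)²) for all x ∈ ℝ, then α < 0. -/

import Mathlib

open intervalIntegral MeasureTheory

/-- FTC: derivative of `x ↦ ∫ t in 0..x, g t` for continuous `g`. -/
lemma ftc_hasDerivAt {g : ℝ → ℝ} (hg : Continuous g) (x : ℝ) :
    HasDerivAt (fun y => ∫ t in (0:ℝ)..y, g t) (g x) x :=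
  intervalIntegral.integral_hasDerivAt_right (hg.intervalIntegrable _ _)
    hg.stronglyMeasurable.stronglyMeasurableAtFilter hg.continuousAt

/-- Integral of a continuous periodic function over any unit window. -/
lemma periodic_unit_integral {f : ℝ → ℝ} (hf : Continuous f)
    (hp : Function.Periodic f 1) (a : ℝ) :
    (∫ t in a..(a+1), f t) = ∫ t in (0:ℝ)..1, f t := by
  have hG : ∀ x : ℝ, HasDerivAt
      (fun y => (∫ t in (0:ℝ)..(y+1), f t) - ∫ t in (0:ℝ)..y, f t) 0 x := by
    intro x
    have h1 : HasDerivAt (fun y : ℝ => ∫ t in (0:ℝ)..(y+1), f t) (f (x+1)) x := by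
      have := (ftc_hasDerivAt hf (x+1)).comp x ((hasDerivAt_id x).add_const 1)
      simpa [Function.comp_def] using this
    have h2 := (h1.sub (ftc_hasDerivAt hf x))
    rw [hp x, sub_self] at h2
    exact h2
  have hconst := is_const_of_deriv_eq_zero (f := fun y =>
      (∫ t in (0:ℝ)..(y+1), f t) - ∫ t in (0:ℝ)..y, f t)
    (fun x => (hG x).differentiableAt) (fun x => (hG x).deriv) a 0
  have hsplit : (∫ t in (0:ℝ)..a, f t) + (∫ t in a..(a+1), f t) = ∫ t in (0:ℝ)..(a+1), f t :=
    intervalIntegral.integral_add_adjacent_intervals (hf.intervalIntegrable _ _)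
      (hf.intervalIntegrable _ _)
  simp only [zero_add, intervalIntegral.integral_same, sub_zero] at hconst
  linarith

/-- Positivity of the integral of a nonneg continuous function positive somewhere. -/
lemma integral_pos_of_pos_at {f : ℝ → ℝ} (hf : Continuous f)
    (hnn : ∀ x, 0 ≤ f x) {x₀ : ℝ} (hx₀ : x₀ ∈ Set.Icc (0:ℝ) 1) (hpos : 0 < f x₀) :
    0 < ∫ t in (0:ℝ)..1, f t := by
  obtain ⟨δ, hδpos, hδ⟩ := Metric.continuousAt_iff.1 (hf.continuousAt (x := x₀))
    (f x₀ / 2) (by linarith)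
  set δ' := min δ 1 with hδ'def
  have hδ'pos : 0 < δ' := lt_min hδpos one_pos
  have hδ'le : δ' ≤ δ := min_le_left _ _
  obtain ⟨hx0, hx1⟩ := hx₀
  set l := max 0 (x₀ - δ'/2) with hl
  set r := min 1 (x₀ + δ'/2) with hr
  have hl0 : 0 ≤ l := le_max_left _ _
  have hr1 : r ≤ 1 := min_le_left _ _
  have hlr : l < r := by
    apply max_lt <;> apply lt_min <;> linarith
  have hbound : ∀ y ∈ Set.Icc l r, f x₀ / 2 ≤ f y := by
    intro y hy
    obtain ⟨hyl, hyr⟩ := hy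
    have h1 : x₀ - δ'/2 ≤ l := le_max_right _ _
    have h2 : r ≤ x₀ + δ'/2 := min_le_right _ _
    have : dist y x₀ < δ := by
      rw [Real.dist_eq, abs_lt]; constructor <;> linarith
    have := hδ this
    rw [Real.dist_eq, abs_lt] at this
    linarith [this.1, this.2]
  have hmid : (r - l) * (f x₀ / 2) ≤ ∫ t in l..r, f t := by
    have := intervalIntegral.integral_mono_on (le_of_lt hlr)
      (_root_.intervalIntegrable_const (μ := volume) (c := f x₀ / 2)) (hf.intervalIntegrable l r) hbound
    simpa [intervalIntegral.integral_const, smul_eq_mul, mul_div_assoc] using this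
  have h1 : (0:ℝ) ≤ ∫ t in (0:ℝ)..l, f t :=
    intervalIntegral.integral_nonneg hl0 (fun u _ => hnn u)
  have h2 : (0:ℝ) ≤ ∫ t in r..1, f t :=
    intervalIntegral.integral_nonneg hr1 (fun u _ => hnn u)
  have hs1 : (∫ t in (0:ℝ)..l, f t) + (∫ t in l..r, f t) = ∫ t in (0:ℝ)..r, f t :=
    intervalIntegral.integral_add_adjacent_intervals (hf.intervalIntegrable _ _)
      (hf.intervalIntegrable _ _)
  have hs2 : (∫ t in (0:ℝ)..r, f t) + (∫ t in r..1, f t) = ∫ t in (0:ℝ)..1, f t :=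
    intervalIntegral.integral_add_adjacent_intervals (hf.intervalIntegrable _ _)
      (hf.intervalIntegrable _ _)
  have hmidpos : 0 < (r - l) * (f x₀ / 2) := by
    apply mul_pos (by linarith) (by linarith)
  linarith

set_option maxHeartbeats 2000000 in
theorem key_lemma_core
    (d : ℝ) (hd : 0 < d)
    (φ : ℝ → ℝ) (hφ : ContDiff ℝ 1 φ) (hper : Function.Periodic φ 1)
    (hnc : ¬ ∃ c : ℝ, ∀ x, φ x = c)
    (α : ℝ) (F : ℝ → ℝ) (hF : ContDiff ℝ 1 F) (hFper : Function.Periodic F 1)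
    (hFmean : (∫ x in (0:ℝ)..1, F x) = 0)
    (heq : ∀ x, -d * deriv F x +
        (2 * d * deriv φ x * φ x / (1 + φ x ^ 2) +
          φ x * Real.sqrt (1 + φ x ^ 2)) * F x =
      deriv φ x + α * (1 + φ x ^ 2))
    (hm : 0 ≤ ∫ x in (0:ℝ)..1, φ x * Real.sqrt (1 + φ x ^ 2)) :
    α < 0 := by
  -- basic notation
  set p : ℝ → ℝ := fun x => 1 + φ x ^ 2 with hpdef
  set c : ℝ → ℝ := fun x => φ x * Real.sqrt (1 + φ x ^ 2) with hcdef
  -- continuity of φ, deriv φ, F, deriv F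
  have hφc : Continuous φ := hφ.continuous
  have hφd : Differentiable ℝ φ := hφ.differentiable one_ne_zero
  have hdφ : ∀ x, HasDerivAt φ (deriv φ x) x := fun x => (hφd x).hasDerivAt
  have hφ'c : Continuous (deriv φ) := hφ.continuous_deriv le_rfl
  have hFc : Continuous F := hF.continuous
  have hFd : Differentiable ℝ F := hF.differentiable one_ne_zero
  have hdF : ∀ x, HasDerivAt F (deriv F x) x := fun x => (hFd x).hasDerivAt
  have hF'c : Continuous (deriv F) := hF.continuous_deriv le_rfl
  have hppos : ∀ x, 0 < p x := fun x => by positivity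
  have hpc : Continuous p := continuous_const.add (hφc.pow 2)
  have hqpos : ∀ x, 0 < Real.sqrt (1 + φ x ^ 2) := fun x => Real.sqrt_pos.2 (hppos x)
  have hqsq : ∀ x, Real.sqrt (1 + φ x ^ 2) ^ 2 = 1 + φ x ^ 2 :=
    fun x => Real.sq_sqrt (by positivity)
  have hcc : Continuous c := hφc.mul ((continuous_const.add (hφc.pow 2)).sqrt)
  have hpper : Function.Periodic p 1 := fun x => by simp [hpdef, hper x]
  have hcper : Function.Periodic c 1 := fun x => by simp [hcdef, hper x]
  -- the antiderivative C of c, and m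
  set C : ℝ → ℝ := fun x => ∫ t in (0:ℝ)..x, c t with hCdef
  have hCd : ∀ x, HasDerivAt C (c x) x := fun x => ftc_hasDerivAt hcc x
  have hCc : Continuous C :=
    Differentiable.continuous (fun x => (hCd x).differentiableAt)
  set m : ℝ := C 1 with hmdef
  have hm' : 0 ≤ m := hm
  set κ : ℝ := d * (1 - Real.exp (-m / d)) with hκdef
  have hκ : 0 ≤ κ := by
    have : Real.exp (-m/d) ≤ 1 := by
      rw [Real.exp_le_one_iff]
      apply div_nonpos_of_nonpos_of_nonneg (neg_nonpos.2 hm') (le_of_lt hd)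
    nlinarith
  -- C(x+1) = C(x) + m
  have hCadd : ∀ x, C (x + 1) = C x + m := by
    intro x
    have h1 : (∫ t in (0:ℝ)..x, c t) + (∫ t in x..(x+1), c t) = ∫ t in (0:ℝ)..(x+1), c t :=
      intervalIntegral.integral_add_adjacent_intervals (hcc.intervalIntegrable _ _)
        (hcc.intervalIntegrable _ _)
    have h2 := periodic_unit_integral hcc hcper x
    show (∫ t in (0:ℝ)..(x+1), c t) = (∫ t in (0:ℝ)..x, c t) + m
    rw [hmdef]
    show _ = (∫ t in (0:ℝ)..x, c t) + (∫ t in (0:ℝ)..1, c t)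
    rw [← h2]; linarith
  -- the weight EP = e^{C/d} p, its antiderivative P
  set EP : ℝ → ℝ := fun t => Real.exp (C t / d) * p t with hEPdef
  have hEPc : Continuous EP := (Real.continuous_exp.comp (hCc.div_const d)).mul hpc
  have hEPpos : ∀ t, 0 < EP t := fun t => mul_pos (Real.exp_pos _) (hppos t)
  set P : ℝ → ℝ := fun x => ∫ t in (0:ℝ)..x, EP t with hPdef
  have hPd : ∀ x, HasDerivAt P (EP x) x := fun x => ftc_hasDerivAt hEPc x
  have hPsub : ∀ a b : ℝ, P b - P a = ∫ t in a..b, EP t := by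
    intro a b
    have h1 : (∫ t in (0:ℝ)..a, EP t) + (∫ t in a..b, EP t) = ∫ t in (0:ℝ)..b, EP t :=
      intervalIntegral.integral_add_adjacent_intervals (hEPc.intervalIntegrable _ _)
        (hEPc.intervalIntegrable _ _)
    show (∫ t in (0:ℝ)..b, EP t) - (∫ t in (0:ℝ)..a, EP t) = _
    linarith
  have hEPshift : ∀ t, EP (t + 1) = Real.exp (m / d) * EP t := by
    intro t
    show Real.exp (C (t+1) / d) * p (t+1) = Real.exp (m/d) * (Real.exp (C t / d) * p t)
    rw [hCadd t, hpper t, add_div, Real.exp_add]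
    ring
  -- sigma
  set σ : ℝ → ℝ := fun x => Real.exp (-C x / d) * (P x - P (x - 1)) with hσdef
  have hσint : ∀ x, σ x = Real.exp (-C x / d) * ∫ t in (x-1)..x, EP t := by
    intro x; rw [hσdef]; simp only; rw [hPsub]
  have hσpos : ∀ x, 0 < σ x := by
    intro x
    rw [hσint x]
    apply mul_pos (Real.exp_pos _)
    exact intervalIntegral.intervalIntegral_pos_of_pos_on (hEPc.intervalIntegrable _ _)
      (fun t _ => hEPpos t) (by linarith)
  have hσper : Function.Periodic σ 1 := by
    intro x
    have hshift : (∫ t in x..(x+1), EP t) = Real.exp (m/d) * ∫ t in (x-1)..x, EP t := by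
      have hcomp := intervalIntegral.integral_comp_add_right (a := x - 1) (b := x) EP 1
      have : (∫ t in (x-1)..x, EP (t + 1)) = ∫ t in x..(x+1), EP t := by
        rw [hcomp]; norm_num
      rw [← this]
      rw [show (fun t => EP (t+1)) = fun t => Real.exp (m/d) * EP t from funext hEPshift]
      exact intervalIntegral.integral_const_mul _ _
    have hCx : C (x + 1) = C x + m := hCadd x
    rw [hσint (x+1), hσint x]
    have : x + 1 - 1 = x := by ring
    rw [this, hshift, hCx]
    rw [show -(C x + m)/d = -C x/d + (-m/d) by ring, Real.exp_add]
    rw [show m/d = -(-m/d) by ring, Real.exp_neg]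
    have hne : Real.exp (-m/d) ≠ 0 := (Real.exp_pos _).ne'
    field_simp
  -- derivative of σ
  set σ' : ℝ → ℝ := fun x => (κ * p x - c x * σ x) / d with hσ'def
  have hσd : ∀ x, HasDerivAt σ (σ' x) x := by
    intro x
    have h1 : HasDerivAt (fun y => -C y / d) (-c x / d) x := ((hCd x).neg).div_const d
    have hexp : HasDerivAt (fun y => Real.exp (-C y / d))
        (Real.exp (-C x / d) * (-c x / d)) x := h1.exp
    have h2 : HasDerivAt (fun y => P (y - 1)) (EP (x - 1)) x := by
      have := (hPd (x-1)).comp x ((hasDerivAt_id x).sub_const 1)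
      simpa [Function.comp_def] using this
    have h3 : HasDerivAt (fun y => P y - P (y - 1)) (EP x - EP (x - 1)) x := (hPd x).sub h2
    have h4 := hexp.mul h3
    have hval : Real.exp (-C x / d) * (-c x / d) * (P x - P (x-1))
        + Real.exp (-C x / d) * (EP x - EP (x-1)) = σ' x := by
      have e1 : Real.exp (-C x / d) * EP x = p x := by
        show Real.exp (-C x / d) * (Real.exp (C x / d) * p x) = p x
        rw [← mul_assoc, ← Real.exp_add]
        have hz : -C x / d + C x / d = 0 := by ring
        rw [hz, Real.exp_zero, one_mul]
      have e2 : Real.exp (-C x / d) * EP (x - 1) = Real.exp (-m / d) * p x := by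
        show Real.exp (-C x / d) * (Real.exp (C (x-1) / d) * p (x-1)) = _
        have hC1 : C x = C (x - 1) + m := by
          have := hCadd (x - 1); simpa using this
        have hp1 : p (x - 1) = p x := by
          have := (hpper (x - 1)).symm; simpa using this
        rw [hp1, ← mul_assoc, ← Real.exp_add, hC1]
        ring_nf
      have e3 : Real.exp (-C x / d) * (P x - P (x-1)) = σ x := rfl
      calc Real.exp (-C x / d) * (-c x / d) * (P x - P (x-1))
          + Real.exp (-C x / d) * (EP x - EP (x-1))
          = (-c x / d) * (Real.exp (-C x / d) * (P x - P (x-1)))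
            + (Real.exp (-C x / d) * EP x - Real.exp (-C x / d) * EP (x-1)) := by ring
        _ = (-c x / d) * σ x + (p x - Real.exp (-m/d) * p x) := by rw [e1, e2, e3]
        _ = σ' x := by
            rw [hσ'def, hκdef]
            field_simp
            ring
    exact hval ▸ h4
  have hσc : Continuous σ := Differentiable.continuous (fun x => (hσd x).differentiableAt)
  have hσ'c : Continuous σ' :=
    (((continuous_const.mul hpc).sub (hcc.mul hσc)).div_const d)
  -- global positive lower bound for σ
  obtain ⟨xm, hxmIcc, hxmmin⟩ := (isCompact_Icc (a := (0:ℝ)) (b := 1)).exists_isMinOn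
    (Set.nonempty_Icc.2 zero_le_one) hσc.continuousOn
  set ε : ℝ := σ xm with hεdef
  have hεpos : 0 < ε := hσpos xm
  have hεle : ∀ x, ε ≤ σ x := by
    intro x
    have hfr : σ x = σ (Int.fract x) := by
      have := hσper.sub_int_mul_eq (x := x) ⌊x⌋
      simp only [mul_one] at this
      rw [Int.fract]
      exact this.symm
    rw [hfr]
    exact hxmmin ⟨Int.fract_nonneg x, le_of_lt (lt_of_lt_of_le (Int.fract_lt_one x) le_rfl)⟩
  -- the adjoint weight ρ = σ / p
  set ρ : ℝ → ℝ := fun x => σ x / p x with hρdef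
  set ρ' : ℝ → ℝ := fun x => (σ' x * p x - σ x * (2 * φ x * deriv φ x)) / (p x)^2 with hρ'def
  have hpd : ∀ x, HasDerivAt p (2 * φ x * deriv φ x) x := by
    intro x
    have h1 : HasDerivAt (fun y => φ y ^ 2) (2 * φ x * deriv φ x) x := by
      have := (hdφ x).fun_pow 2
      simpa [mul_comm, mul_assoc] using this
    exact h1.const_add 1
  have hρd : ∀ x, HasDerivAt ρ (ρ' x) x := by
    intro x
    exact (hσd x).div (hpd x) (hppos x).ne'
  have hρc : Continuous ρ := hσc.div hpc (fun x => (hppos x).ne')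
  have hρ'c : Continuous ρ' := by
    apply Continuous.div
    · exact (hσ'c.mul hpc).sub (hσc.mul ((continuous_const.mul hφc).mul hφ'c))
    · exact hpc.pow 2
    · exact fun x => pow_ne_zero 2 (hppos x).ne'
  have hρper : Function.Periodic ρ 1 := by
    intro x; simp only [hρdef]; rw [hσper x, hpper x]
  -- the adjoint identity : d * ρ' + b * ρ = κ
  have hadj : ∀ x, d * ρ' x
      + (2 * d * deriv φ x * φ x / (1 + φ x ^ 2) + φ x * Real.sqrt (1 + φ x ^ 2)) * ρ x = κ := by
    intro x
    have hpx : (1 + φ x ^ 2) = p x := rfl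
    have hcx : φ x * Real.sqrt (1 + φ x ^ 2) = c x := rfl
    rw [hρ'def, hρdef, hσ'def, hpx, hcx]
    have hpne : p x ≠ 0 := (hppos x).ne'
    field_simp
    ring
  -- Identity A : ∫ ρ φ' + α ∫ σ = 0
  have hρp : ∀ x, ρ x * (1 + φ x ^ 2) = σ x := by
    intro x
    rw [hρdef]
    show σ x / p x * (1 + φ x ^ 2) = σ x
    rw [show (1 + φ x ^ 2) = p x from rfl]
    have hpne : p x ≠ 0 := (hppos x).ne'
    field_simp
  have e1 : ∀ x, ρ x * deriv φ x + α * σ x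
      = (-d) * (ρ' x * F x + ρ x * deriv F x) + κ * F x := by
    intro x
    linear_combination (-(ρ x)) * (heq x) + (F x) * (hadj x) - α * (hρp x)
  have hprodd : ∀ x, HasDerivAt (fun y => ρ y * F y) (ρ' x * F x + ρ x * deriv F x) x :=
    fun x => (hρd x).mul (hdF x)
  have hprod'c : Continuous (fun x => ρ' x * F x + ρ x * deriv F x) :=
    (hρ'c.mul hFc).add (hρc.mul hF'c)
  have hintd : (∫ x in (0:ℝ)..1, (ρ' x * F x + ρ x * deriv F x)) = 0 := by
    rw [intervalIntegral.integral_eq_sub_of_hasDerivAt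
      (fun x _ => hprodd x) (hprod'c.intervalIntegrable _ _)]
    have h1 : ρ 1 = ρ 0 := by have := hρper 0; simpa using this
    have h2 : F 1 = F 0 := by have := hFper 0; simpa using this
    rw [h1, h2]; ring
  have keyA : (∫ x in (0:ℝ)..1, ρ x * deriv φ x) + α * (∫ x in (0:ℝ)..1, σ x) = 0 := by
    have hL : (∫ x in (0:ℝ)..1, (ρ x * deriv φ x + α * σ x))
        = (∫ x in (0:ℝ)..1, ρ x * deriv φ x) + α * (∫ x in (0:ℝ)..1, σ x) := by
      rw [intervalIntegral.integral_add (f := fun x => ρ x * deriv φ x) (g := fun x => α * σ x) ((hρc.mul hφ'c).intervalIntegrable _ _)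
        ((continuous_const.mul hσc).intervalIntegrable _ _)]
      rw [intervalIntegral.integral_const_mul]
    have hR : (∫ x in (0:ℝ)..1, (ρ x * deriv φ x + α * σ x))
        = (-d) * (∫ x in (0:ℝ)..1, (ρ' x * F x + ρ x * deriv F x))
          + κ * (∫ x in (0:ℝ)..1, F x) := by
      rw [intervalIntegral.integral_congr (g :=
        fun x => (-d) * (ρ' x * F x + ρ x * deriv F x) + κ * F x) (fun x _ => e1 x)]
      rw [intervalIntegral.integral_add (f := fun x => (-d) * (ρ' x * F x + ρ x * deriv F x)) (g := fun x => κ * F x) ((continuous_const.mul hprod'c).intervalIntegrable _ _)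
        ((continuous_const.mul hFc).intervalIntegrable _ _)]
      rw [intervalIntegral.integral_const_mul, intervalIntegral.integral_const_mul]
    rw [← hL, hR, hintd, hFmean]
    ring
  -- Identity B machinery
  set θ : ℝ → ℝ := fun x => Real.arctan (φ x) with hθdef
  set θD : ℝ → ℝ := fun x => 1 / (1 + φ x ^ 2) * deriv φ x with hθDdef
  have hθd : ∀ x, HasDerivAt θ (θD x) x := by
    intro x
    exact (Real.hasDerivAt_arctan (φ x)).comp x (hdφ x)
  have hθc : Continuous θ := Real.continuous_arctan.comp hφc
  have hθDc : Continuous θD :=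
    ((continuous_const.div hpc (fun x => (hppos x).ne')).mul hφ'c)
  have hθper : Function.Periodic θ 1 := by
    intro x; simp only [hθdef]; rw [hper x]
  -- A and the exact antiderivative trick
  set A : ℝ → ℝ := fun x => Real.arcsin (min 1 (κ / σ x)) with hAdef
  set g : ℝ → ℝ := fun u => Real.arcsin (min 1 (κ / max u ε)) with hgdef
  have hmaxpos : ∀ u : ℝ, 0 < max u ε := fun u => lt_of_lt_of_le hεpos (le_max_right u ε)
  have hgc : Continuous g := by
    apply Real.continuous_arcsin.comp
    apply continuous_const.min
    exact continuous_const.div (continuous_id.max continuous_const)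
      (fun u => (hmaxpos u).ne')
  have hgσ : ∀ x, g (σ x) = A x := by
    intro x
    simp only [hgdef, hAdef]
    rw [max_eq_left (hεle x)]
  have hAc : Continuous A := by
    apply Real.continuous_arcsin.comp
    exact continuous_const.min (continuous_const.div hσc (fun x => (hσpos x).ne'))
  have hAper : Function.Periodic A 1 := by
    intro x; simp only [hAdef]; rw [hσper x]
  set S : ℝ → ℝ := fun u => ∫ t in (0:ℝ)..u, g t with hSdef
  have hSd : ∀ u, HasDerivAt S (g u) u := fun u => ftc_hasDerivAt hgc u
  have hSσd : ∀ x, HasDerivAt (fun y => S (σ y)) (g (σ x) * σ' x) x := by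
    intro x
    exact (hSd (σ x)).comp x (hσd x)
  have hAint : (∫ x in (0:ℝ)..1, A x * σ' x) = 0 := by
    have h1 : (∫ x in (0:ℝ)..1, g (σ x) * σ' x) = S (σ 1) - S (σ 0) :=
      intervalIntegral.integral_eq_sub_of_hasDerivAt (fun x _ => hSσd x)
        (((hgc.comp hσc).mul hσ'c).intervalIntegrable _ _)
    have h2 : σ 1 = σ 0 := by have := hσper 0; simpa using this
    have h3 : (∫ x in (0:ℝ)..1, A x * σ' x) = ∫ x in (0:ℝ)..1, g (σ x) * σ' x := by
      apply intervalIntegral.integral_congr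
      intro x _
      show A x * σ' x = g (σ x) * σ' x
      rw [hgσ x]
    rw [h3, h1, h2, sub_self]
  -- ∫ θD σ + ∫ θ σ' = 0
  have hθσint : (∫ x in (0:ℝ)..1, (θD x * σ x + θ x * σ' x)) = 0 := by
    have h1 : (∫ x in (0:ℝ)..1, (θD x * σ x + θ x * σ' x))
        = θ 1 * σ 1 - θ 0 * σ 0 :=
      intervalIntegral.integral_eq_sub_of_hasDerivAt
        (fun x _ => (hθd x).mul (hσd x))
        (((hθDc.mul hσc).add (hθc.mul hσ'c)).intervalIntegrable _ _)
    have h2 : σ 1 = σ 0 := by have := hσper 0; simpa using this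
    have h3 : θ 1 = θ 0 := by have := hθper 0; simpa using this
    rw [h1, h2, h3, sub_self]
  -- R and the final rewriting of ∫ ρ φ'
  set R : ℝ → ℝ := fun x => (θ x - A x) * (c x * σ x - κ * p x) with hRdef
  have hRc : Continuous R :=
    (hθc.sub hAc).mul ((hcc.mul hσc).sub (continuous_const.mul hpc))
  have hRper : Function.Periodic R 1 := by
    intro x
    simp only [hRdef]
    rw [hθper x, hAper x, hcper x, hσper x, hpper x]
  have hfinal1 : (∫ x in (0:ℝ)..1, ρ x * deriv φ x) = ∫ x in (0:ℝ)..1, R x / d := by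
    have h0 : (∫ x in (0:ℝ)..1, ρ x * deriv φ x) = ∫ x in (0:ℝ)..1, θD x * σ x := by
      apply intervalIntegral.integral_congr
      intro x _
      rw [hρdef, hθDdef]
      show σ x / p x * deriv φ x = 1 / (1 + φ x ^ 2) * deriv φ x * σ x
      rw [show (1 + φ x ^ 2) = p x from rfl]
      field_simp
    have h1 : (∫ x in (0:ℝ)..1, θD x * σ x)
        = (∫ x in (0:ℝ)..1, (θD x * σ x + θ x * σ' x)) - ∫ x in (0:ℝ)..1, θ x * σ' x := by
      rw [intervalIntegral.integral_add (f := fun x => θD x * σ x) (g := fun x => θ x * σ' x) ((hθDc.mul hσc).intervalIntegrable _ _)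
        ((hθc.mul hσ'c).intervalIntegrable _ _)]
      ring
    have h2 : (∫ x in (0:ℝ)..1, θD x * σ x) = - ∫ x in (0:ℝ)..1, θ x * σ' x := by
      rw [h1, hθσint]; ring
    have h3 : (∫ x in (0:ℝ)..1, (A x - θ x) * σ' x)
        = (∫ x in (0:ℝ)..1, A x * σ' x) - ∫ x in (0:ℝ)..1, θ x * σ' x := by
      have : (∫ x in (0:ℝ)..1, (A x - θ x) * σ' x)
          = ∫ x in (0:ℝ)..1, (A x * σ' x - θ x * σ' x) := by
        apply intervalIntegral.integral_congr
        intro x _; ring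
      rw [this, intervalIntegral.integral_sub (f := fun x => A x * σ' x) (g := fun x => θ x * σ' x) ((hAc.mul hσ'c).intervalIntegrable _ _)
        ((hθc.mul hσ'c).intervalIntegrable _ _)]
    have h4 : (∫ x in (0:ℝ)..1, (A x - θ x) * σ' x) = ∫ x in (0:ℝ)..1, R x / d := by
      apply intervalIntegral.integral_congr
      intro x _
      rw [hRdef, hσ'def]
      show (A x - θ x) * ((κ * p x - c x * σ x) / d) = (θ x - A x) * (c x * σ x - κ * p x) / d
      field_simp
      ring
    rw [h0, h2, ← h4, h3, hAint]
    ring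
  -- pointwise facts about A and sin
  have hpi : (0:ℝ) < Real.pi := Real.pi_pos
  have hAsin : ∀ x, Real.sin (A x) = min 1 (κ / σ x) := by
    intro x
    have hy0 : (0:ℝ) ≤ min 1 (κ / σ x) :=
      le_min zero_le_one (div_nonneg hκ (hσpos x).le)
    exact Real.sin_arcsin (by linarith) (min_le_left _ _)
  have hA0 : ∀ x, 0 ≤ A x := by
    intro x
    apply Real.arcsin_nonneg.2
    exact le_min zero_le_one (div_nonneg hκ (hσpos x).le)
  have hA2 : ∀ x, A x ≤ Real.pi / 2 := fun x => Real.arcsin_le_pi_div_two _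
  have hmemt : ∀ x, θ x ∈ Set.Icc (-(Real.pi/2)) (Real.pi/2) := by
    intro x
    exact ⟨(Real.neg_pi_div_two_lt_arctan (φ x)).le, (Real.arctan_lt_pi_div_two (φ x)).le⟩
  have hmemA : ∀ x, A x ∈ Set.Icc (-(Real.pi/2)) (Real.pi/2) := by
    intro x
    exact ⟨by linarith [hA0 x], hA2 x⟩
  have hsintlt : ∀ x, Real.sin (θ x) < 1 := by
    intro x
    have h1 := Real.strictMonoOn_sin (hmemt x)
      ⟨by linarith, le_rfl⟩ (Real.arctan_lt_pi_div_two (φ x))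
    simpa [Real.sin_pi_div_two] using h1
  have hc_eq : ∀ x, c x = p x * Real.sin (θ x) := by
    intro x
    show φ x * Real.sqrt (1 + φ x ^ 2) = (1 + φ x ^ 2) * Real.sin (Real.arctan (φ x))
    rw [Real.sin_arctan]
    have hq := hqpos x
    have hq2 : Real.sqrt (1 + φ x ^ 2) * Real.sqrt (1 + φ x ^ 2) = 1 + φ x ^ 2 :=
      Real.mul_self_sqrt (by positivity)
    field_simp
    linear_combination φ x * hq2
  have hfac : ∀ x, c x * σ x - κ * p x = p x * (σ x * Real.sin (θ x) - κ) := by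
    intro x; rw [hc_eq x]; ring
  -- pointwise nonnegativity of R
  have hRnn : ∀ x, 0 ≤ R x := by
    intro x
    have hu := hσpos x
    rw [hRdef]
    show 0 ≤ (θ x - A x) * (c x * σ x - κ * p x)
    rw [hfac x]
    rcases le_total (θ x) (A x) with hle | hge
    · have hsins : Real.sin (θ x) ≤ min 1 (κ / σ x) := by
        rw [← hAsin x]
        exact Real.strictMonoOn_sin.monotoneOn (hmemt x) (hmemA x) hle
      have h2 : σ x * Real.sin (θ x) ≤ κ := by
        have h3 : Real.sin (θ x) ≤ κ / σ x := le_trans hsins (min_le_right _ _)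
        have := (le_div_iff₀ hu).1 h3
        linarith
      have h5 : p x * (σ x * Real.sin (θ x) - κ) ≤ 0 :=
        mul_nonpos_of_nonneg_of_nonpos (hppos x).le (sub_nonpos.2 h2)
      nlinarith [sub_nonpos.2 hle, h5]
    · have hsins : min 1 (κ / σ x) ≤ Real.sin (θ x) := by
        rw [← hAsin x]
        exact Real.strictMonoOn_sin.monotoneOn (hmemA x) (hmemt x) hge
      have h2 : κ ≤ σ x * Real.sin (θ x) := by
        by_cases hcase : κ / σ x ≤ 1
        · have hy : min 1 (κ / σ x) = κ / σ x := min_eq_right hcase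
          rw [hy] at hsins
          have := (div_le_iff₀ hu).1 hsins
          linarith
        · push_neg at hcase
          have hy : min 1 (κ / σ x) = 1 := min_eq_left hcase.le
          rw [hy] at hsins
          linarith [hsintlt x]
      exact mul_nonneg (sub_nonneg.2 hge)
        (mul_nonneg (hppos x).le (sub_nonneg.2 h2))
  -- R ≡ 0 forces φ constant
  have hforce : ∀ x, R x = 0 → σ x * Real.sin (θ x) = κ := by
    intro x h
    rw [hRdef] at h
    have h' : (θ x - A x) * (p x * (σ x * Real.sin (θ x) - κ)) = 0 := by
      rw [← hfac x]; exact h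
    rcases mul_eq_zero.1 h' with h1 | h2
    · have ht : θ x = A x := by linarith [sub_eq_zero.1 h1]
      have hsint : Real.sin (θ x) = min 1 (κ / σ x) := by rw [ht, hAsin x]
      by_cases hcase : κ / σ x ≤ 1
      · have hy : min 1 (κ / σ x) = κ / σ x := min_eq_right hcase
        rw [hy] at hsint
        have hcan : σ x * (κ / σ x) = κ := by
          rw [mul_comm]
          exact div_mul_cancel₀ κ (hσpos x).ne'
        rw [hsint]
        exact hcan
      · push_neg at hcase
        have hy : min 1 (κ / σ x) = 1 := min_eq_left hcase.le
        rw [hy] at hsint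
        exfalso
        linarith [hsintlt x]
    · rcases mul_eq_zero.1 h2 with h3 | h4
      · exact absurd h3 (hppos x).ne'
      · linarith
  have hzero : ¬ (∀ x, R x = 0) := by
    intro hall
    have hσ'0 : ∀ x, σ' x = 0 := by
      intro x
      have h1 := hforce x (hall x)
      have h2 : c x * σ x = κ * p x := by
        rw [hc_eq x]
        linear_combination p x * h1
      show (κ * p x - c x * σ x) / d = 0
      rw [h2, sub_self, zero_div]
    have hσconst : ∀ x, σ x = σ 0 := by
      intro x
      exact is_const_of_deriv_eq_zero
        (fun y => (hσd y).differentiableAt)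
        (fun y => by rw [(hσd y).deriv]; exact hσ'0 y) x 0
    have hsinconst : ∀ x, Real.sin (θ x) = Real.sin (θ 0) := by
      intro x
      have h1 := hforce x (hall x)
      have h2 := hforce 0 (hall 0)
      rw [hσconst x] at h1
      have hσ0 := hσpos 0
      have e1 : Real.sin (θ x) = κ / σ 0 := by
        field_simp at h1 ⊢
        linarith
      have e2 : Real.sin (θ 0) = κ / σ 0 := by
        field_simp at h2 ⊢
        linarith
      rw [e1, e2]
    have hφconst : ∀ x, φ x = φ 0 := by
      intro x
      have hθeq : θ x = θ 0 :=
        Real.injOn_sin (hmemt x) (hmemt 0) (hsinconst x)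
      exact Real.arctan_injective hθeq
    exact hnc ⟨φ 0, hφconst⟩
  -- strict positivity of ∫ R
  have hex : ∃ x, R x ≠ 0 := by
    by_contra hco
    push_neg at hco
    exact hzero hco
  obtain ⟨x₀, hx₀⟩ := hex
  have hfr : R (Int.fract x₀) = R x₀ := by
    have h0 := hRper.sub_int_mul_eq (x := x₀) ⌊x₀⌋
    have he : x₀ - (⌊x₀⌋ : ℝ) * 1 = Int.fract x₀ := by
      rw [Int.fract]; ring
    rw [he] at h0
    exact h0
  have hx₁mem : Int.fract x₀ ∈ Set.Icc (0:ℝ) 1 :=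
    ⟨Int.fract_nonneg x₀, (Int.fract_lt_one x₀).le⟩
  have hRx₁pos : 0 < R (Int.fract x₀) := by
    rcases lt_or_eq_of_le (hRnn (Int.fract x₀)) with h | h
    · exact h
    · exact absurd (hfr ▸ h.symm) hx₀
  have hRintpos : 0 < ∫ x in (0:ℝ)..1, R x :=
    integral_pos_of_pos_at hRc hRnn hx₁mem hRx₁pos
  -- positivity of ∫ σ
  have hσintpos : (0:ℝ) < ∫ x in (0:ℝ)..1, σ x := by
    have h1 : (∫ x in (0:ℝ)..1, ε) ≤ ∫ x in (0:ℝ)..1, σ x := by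
      apply intervalIntegral.integral_mono_on zero_le_one
        (_root_.intervalIntegrable_const (μ := volume) (c := ε))
        (hσc.intervalIntegrable _ _)
      exact fun x _ => hεle x
    have h2 : (∫ x in (0:ℝ)..1, (ε:ℝ)) = ε := by
      rw [intervalIntegral.integral_const]
      norm_num
    linarith
  -- conclusion
  have hdiv : (∫ x in (0:ℝ)..1, R x / d) = (∫ x in (0:ℝ)..1, R x) / d :=
    intervalIntegral.integral_div d R
  have hfinal2 : 0 < ∫ x in (0:ℝ)..1, ρ x * deriv φ x := by
    rw [hfinal1, hdiv]
    exact div_pos hRintpos hd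
  by_contra hα
  push_neg at hα
  nlinarith [keyA, hfinal2, hσintpos]

set_option maxHeartbeats 1000000 in
theorem key_lemma
    (d : ℝ) (hd : 0 < d)
    (φ : ℝ → ℝ) (hφ : ContDiff ℝ 1 φ) (hper : Function.Periodic φ 1)
    (hnc : ¬ ∃ c : ℝ, ∀ x, φ x = c)
    (α : ℝ) (F : ℝ → ℝ) (hF : ContDiff ℝ 1 F) (hFper : Function.Periodic F 1)
    (hFmean : (∫ x in (0:ℝ)..1, F x) = 0)
    (heq : ∀ x, -d * deriv F x +
        (2 * d * deriv φ x * φ x / (1 + φ x ^ 2) +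
          φ x * Real.sqrt (1 + φ x ^ 2)) * F x =
      deriv φ x + α * (1 + φ x ^ 2)) :
    α < 0 := by
  by_cases hm : 0 ≤ ∫ x in (0:ℝ)..1, φ x * Real.sqrt (1 + φ x ^ 2)
  · exact key_lemma_core d hd φ hφ hper hnc α F hF hFper hFmean heq hm
  · push_neg at hm
    have hφc : Continuous φ := hφ.continuous
    have hFc : Continuous F := hF.continuous
    have hφd : Differentiable ℝ φ := hφ.differentiable one_ne_zero
    have hdφ : ∀ x, HasDerivAt φ (deriv φ x) x := fun x => (hφd x).hasDerivAt
    have hFd : Differentiable ℝ F := hF.differentiable one_ne_zero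
    have hdF : ∀ x, HasDerivAt F (deriv F x) x := fun x => (hFd x).hasDerivAt
    have hcc : Continuous (fun x => φ x * Real.sqrt (1 + φ x ^ 2)) :=
      hφc.mul ((continuous_const.add (hφc.pow 2)).sqrt)
    have hcper : Function.Periodic (fun x => φ x * Real.sqrt (1 + φ x ^ 2)) 1 := by
      intro x; simp only; rw [hper x]
    -- reflected data
    set ψ : ℝ → ℝ := fun x => -φ (-x) with hψdef
    set G : ℝ → ℝ := fun x => -F (-x) with hGdef
    have hψ : ContDiff ℝ 1 ψ := (hφ.comp contDiff_neg).neg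
    have hG : ContDiff ℝ 1 G := (hF.comp contDiff_neg).neg
    have hψper : Function.Periodic ψ 1 := by
      intro x
      show -φ (-(x+1)) = -φ (-x)
      have h1 := hper (-x - 1)
      have h2 : -x - 1 + 1 = -x := by ring
      rw [h2] at h1
      have h3 : -(x+1) = -x - 1 := by ring
      rw [h3, h1]
    have hGper : Function.Periodic G 1 := by
      intro x
      show -F (-(x+1)) = -F (-x)
      have h1 := hFper (-x - 1)
      have h2 : -x - 1 + 1 = -x := by ring
      rw [h2] at h1
      have h3 : -(x+1) = -x - 1 := by ring
      rw [h3, h1]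
    have hψnc : ¬ ∃ c : ℝ, ∀ x, ψ x = c := by
      rintro ⟨k, hk⟩
      apply hnc
      refine ⟨-k, fun x => ?_⟩
      have := hk (-x)
      show φ x = -k
      simp only [hψdef, neg_neg] at this
      linarith
    have hdψ : ∀ x, deriv ψ x = deriv φ (-x) := by
      intro x
      have h1 : HasDerivAt ψ (deriv φ (-x)) x := by
        have h2 := ((hdφ (-x)).comp x (hasDerivAt_neg x)).neg
        simp [Function.comp_def] at h2
        exact h2
      exact h1.deriv
    have hdG : ∀ x, deriv G x = deriv F (-x) := by
      intro x
      have h1 : HasDerivAt G (deriv F (-x)) x := by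
        have h2 := ((hdF (-x)).comp x (hasDerivAt_neg x)).neg
        simp [Function.comp_def] at h2
        exact h2
      exact h1.deriv
    have hGmean : (∫ x in (0:ℝ)..1, G x) = 0 := by
      have h1 : (∫ x in (0:ℝ)..1, G x) = - ∫ x in (0:ℝ)..1, F (-x) := by
        rw [show G = fun x => -F (-x) from rfl]
        exact intervalIntegral.integral_neg
      have h2 : (∫ x in (0:ℝ)..1, F (-x)) = ∫ x in (-1:ℝ)..0, F x := by
        have := intervalIntegral.integral_comp_neg (a := (0:ℝ)) (b := 1) F
        simpa using this
      have h3 : (∫ x in (-1:ℝ)..0, F x) = ∫ x in (0:ℝ)..1, F x := by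
        have := periodic_unit_integral hFc hFper (-1)
        norm_num at this
        exact this
      rw [h1, h2, h3, hFmean, neg_zero]
    have hψm : 0 ≤ ∫ x in (0:ℝ)..1, ψ x * Real.sqrt (1 + ψ x ^ 2) := by
      have h0 : (∫ x in (0:ℝ)..1, ψ x * Real.sqrt (1 + ψ x ^ 2))
          = - ∫ x in (0:ℝ)..1, φ (-x) * Real.sqrt (1 + φ (-x) ^ 2) := by
        rw [show (fun x => ψ x * Real.sqrt (1 + ψ x ^ 2))
            = fun x => -(φ (-x) * Real.sqrt (1 + φ (-x) ^ 2)) from funext fun x => by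
          show -φ (-x) * Real.sqrt (1 + (-φ (-x)) ^ 2) = _
          rw [neg_sq]; ring]
        exact intervalIntegral.integral_neg
      have h2 : (∫ x in (0:ℝ)..1, φ (-x) * Real.sqrt (1 + φ (-x) ^ 2))
          = ∫ x in (-1:ℝ)..0, φ x * Real.sqrt (1 + φ x ^ 2) := by
        have := intervalIntegral.integral_comp_neg (a := (0:ℝ)) (b := 1)
          (fun x => φ x * Real.sqrt (1 + φ x ^ 2))
        simpa using this
      have h3 : (∫ x in (-1:ℝ)..0, φ x * Real.sqrt (1 + φ x ^ 2))
          = ∫ x in (0:ℝ)..1, φ x * Real.sqrt (1 + φ x ^ 2) := by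
        have := periodic_unit_integral hcc hcper (-1)
        norm_num at this
        exact this
      rw [h0, h2, h3]
      linarith
    have hψeq : ∀ x, -d * deriv G x +
        (2 * d * deriv ψ x * ψ x / (1 + ψ x ^ 2) +
          ψ x * Real.sqrt (1 + ψ x ^ 2)) * G x =
        deriv ψ x + α * (1 + ψ x ^ 2) := by
      intro x
      rw [hdψ x, hdG x]
      show -d * deriv F (-x) +
        (2 * d * deriv φ (-x) * (-φ (-x)) / (1 + (-φ (-x)) ^ 2) +
          (-φ (-x)) * Real.sqrt (1 + (-φ (-x)) ^ 2)) * (-F (-x)) =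
        deriv φ (-x) + α * (1 + (-φ (-x)) ^ 2)
      rw [neg_sq]
      have h := heq (-x)
      have hp : (0:ℝ) < 1 + φ (-x) ^ 2 := by positivity
      field_simp at h ⊢
      linarith [h]
    exact key_lemma_core d hd ψ hψ hψper hψnc α G hG hGper hGmean hψeq hψm
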